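/- Let Σ be an n×n positive definite matrix written as Σ = a I + S with a > 0 and S positive definite. Then for any vector θ and any subset A ⊆ {1,…,n}, the signal-to-noise ratio satisfies θ_Aᵀ Σ_A⁻¹ θ_A = θᵀ S⁻¹ θ − θᵀ S⁻¹ [S⁻¹ + a⁻¹ diag(1_A)]⁻¹ S⁻¹ θ, where θ_A = Φ_A θ and Σ_A = Φ_A Σ Φ_Aᵀ with Φ_A the selection matrix of rows of the identity indexed by A. -/

import Mathlib

open Matrix

section aux
variable {n : ℕ} {A : Finset (Fin n)} {m : Type*} [Fintype m]

noncomputable def phiM (n : ℕ) (A : Finset (Fin n)) : Matrix {x // x ∈ A} (Fin n) ℝ :=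
  fun i j => if (i : Fin n) = j then 1 else 0

lemma phiM_mul (X : Matrix (Fin n) m ℝ) :
    phiM n A * X = X.submatrix Subtype.val id := by
  ext i j
  simp [phiM, Matrix.mul_apply, ite_mul]

lemma mul_phiMT (X : Matrix m (Fin n) ℝ) :
    X * (phiM n A)ᵀ = X.submatrix id Subtype.val := by
  ext i j
  simp [phiM, Matrix.mul_apply, mul_ite, eq_comm]

lemma phiMT_mul_phiM :
    (phiM n A)ᵀ * phiM n A
      = Matrix.diagonal (fun i => if i ∈ A then (1 : ℝ) else 0) := by
  ext i j
  simp only [Matrix.mul_apply, Matrix.transpose_apply, phiM]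
  rw [Finset.sum_coe_sort A (fun k => (if k = i then (1:ℝ) else 0) * (if k = j then 1 else 0))]
  · rcases eq_or_ne i j with rfl | hij
    · by_cases hi : i ∈ A <;>
        simp [Finset.sum_ite_eq', hi, Matrix.diagonal_apply, Subtype.ext_iff]
    · rw [Finset.sum_eq_zero, Matrix.diagonal_apply_ne _ hij]
      intro k _
      rcases eq_or_ne k i with rfl | h
      · simp [hij]
      · simp [h]
end aux

theorem snr_schur_identity {n : ℕ} (S Sig : Matrix (Fin n) (Fin n) ℝ) (a : ℝ)
    (ha : 0 < a) (hS : S.PosDef) (hSig : Sig = a • (1 : Matrix (Fin n) (Fin n) ℝ) + S)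
    (θ : Fin n → ℝ) (A : Finset (Fin n)) :
    (fun i : {x // x ∈ A} => θ i.1) ⬝ᵥ
        ((Sig.submatrix (Subtype.val : {x // x ∈ A} → Fin n) Subtype.val)⁻¹ *ᵥ
          fun i : {x // x ∈ A} => θ i.1) =
      θ ⬝ᵥ (S⁻¹ *ᵥ θ) -
        θ ⬝ᵥ ((S⁻¹ *
          (S⁻¹ + a⁻¹ • Matrix.diagonal (fun i => if i ∈ A then (1 : ℝ) else 0))⁻¹ * S⁻¹) *ᵥ θ) := by
  classical
  set Φ : Matrix {x // x ∈ A} (Fin n) ℝ := phiM n A with hΦdef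
  set D : Matrix (Fin n) (Fin n) ℝ :=
    Matrix.diagonal (fun i => if i ∈ A then (1 : ℝ) else 0) with hDdef
  set SA : Matrix {x // x ∈ A} {x // x ∈ A} ℝ :=
    Sig.submatrix (Subtype.val : {x // x ∈ A} → Fin n) Subtype.val with hSAdef
  set G : Matrix {x // x ∈ A} {x // x ∈ A} ℝ := SA⁻¹ with hGdef
  set B : Matrix {x // x ∈ A} {x // x ∈ A} ℝ :=
    S.submatrix (Subtype.val : {x // x ∈ A} → Fin n) Subtype.val with hBdef
  set P : Matrix (Fin n) (Fin n) ℝ := Φᵀ * (G * Φ) with hPdef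
  -- basic Φ relations
  have hPhiSig : Φ * Sig * Φᵀ = SA := by
    rw [hΦdef, phiM_mul, mul_phiMT]; simp [hSAdef]
  have hBphi : Φ * S * Φᵀ = B := by
    rw [hΦdef, phiM_mul, mul_phiMT]; simp [hBdef]
  have hDphi : D = Φᵀ * Φ := by rw [hΦdef, phiMT_mul_phiM]
  -- positive definiteness
  have hone : (a • (1 : Matrix (Fin n) (Fin n) ℝ)).PosDef := by
    have : (a • (1 : Matrix (Fin n) (Fin n) ℝ))
        = Matrix.diagonal (fun _ : Fin n => a) := by
      ext i j
      by_cases h : i = j <;>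
        simp [Matrix.diagonal_apply, Matrix.one_apply, h]
    rw [this]
    exact Matrix.posDef_diagonal_iff.mpr fun _ => ha
  have hSigPD : Sig.PosDef := hSig ▸ hone.add hS
  have hSAPD : SA.PosDef := by
    refine Matrix.PosDef.of_dotProduct_mulVec_pos (hSigPD.1.submatrix _) fun x hx => ?_
    have hy : (Φᵀ *ᵥ x) ≠ 0 := by
      intro h
      apply hx
      funext i
      have h2 := congrFun h i.1
      simpa [hΦdef, phiM, Matrix.mulVec, dotProduct, ite_mul,
        Subtype.coe_inj] using h2
    have hpos := hSigPD.dotProduct_mulVec_pos hy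
    rw [star_trivial] at hpos ⊢
    rw [← hPhiSig, ← Matrix.mulVec_mulVec, ← Matrix.mulVec_mulVec,
      Matrix.dotProduct_mulVec, ← Matrix.mulVec_transpose]
    exact hpos
  -- invertibility facts
  have hdetS : IsUnit S.det := hS.det_pos.ne'.isUnit
  have hSinvS : S⁻¹ * S = 1 := Matrix.nonsing_inv_mul S hdetS
  have hSSinv : S * S⁻¹ = 1 := Matrix.mul_nonsing_inv S hdetS
  have hGA : SA * G = 1 := Matrix.mul_nonsing_inv _ hSAPD.det_pos.ne'.isUnit
  -- SA = a•1 + B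
  have hSAsplit : SA = a • (1 : Matrix {x // x ∈ A} {x // x ∈ A} ℝ) + B := by
    rw [hSAdef, hSig, hBdef]
    ext i j
    simp [Matrix.submatrix_apply, Matrix.one_apply, Subtype.coe_inj]
  -- key scalar identity
  have hkey : a⁻¹ • ((1 : Matrix {x // x ∈ A} {x // x ∈ A} ℝ) - B * G) = G := by
    have h1 : a • G + B * G = 1 := by
      calc a • G + B * G = (a • 1 + B) * G := by rw [add_mul, smul_mul_assoc, one_mul]
        _ = 1 := by rw [← hSAsplit, hGA]
    have h2 : (1 : Matrix {x // x ∈ A} {x // x ∈ A} ℝ) - B * G = a • G :=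
      sub_eq_iff_eq_add.mpr h1.symm
    rw [h2, smul_smul, inv_mul_cancel₀ ha.ne', one_smul]
  -- the Woodbury-type inverse
  have hMX : (S⁻¹ + a⁻¹ • D) * (S - S * P * S) = 1 := by
    rw [add_mul, Matrix.mul_sub, smul_mul_assoc, Matrix.mul_sub,
      show S * P * S = S * (P * S) from by rw [Matrix.mul_assoc],
      ← Matrix.mul_assoc S⁻¹ S (P * S), hSinvS, one_mul]
    have hclaim : a⁻¹ • (D * S - D * (S * (P * S))) = P * S := by
      have e1 : D * S = Φᵀ * (Φ * S) := by rw [hDphi, Matrix.mul_assoc]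
      have e2 : D * (S * (P * S)) = Φᵀ * (B * (G * (Φ * S))) := by
        rw [hDphi, hPdef, ← hBphi]
        simp only [Matrix.mul_assoc]
      have e3 : P * S = Φᵀ * (G * (Φ * S)) := by
        rw [hPdef]; simp only [Matrix.mul_assoc]
      rw [e1, e2, e3, ← Matrix.mul_sub, ← Matrix.mul_smul]
      congr 1
      conv_rhs => rw [← hkey, Matrix.smul_mul]
      rw [Matrix.sub_mul, Matrix.one_mul, Matrix.mul_assoc]
    rw [hclaim]
    abel
  have hMinv : (S⁻¹ + a⁻¹ • D)⁻¹ = S - S * P * S := Matrix.inv_eq_right_inv hMX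
  have hfinal : S⁻¹ * (S⁻¹ + a⁻¹ • D)⁻¹ * S⁻¹ = S⁻¹ - P := by
    rw [hMinv]
    have h3 : S⁻¹ * (S - S * P * S) = 1 - P * S := by
      rw [Matrix.mul_sub, hSinvS,
        show S * P * S = S * (P * S) from by rw [Matrix.mul_assoc],
        ← Matrix.mul_assoc S⁻¹ S (P * S), hSinvS, Matrix.one_mul]
    rw [h3, Matrix.sub_mul, Matrix.one_mul, Matrix.mul_assoc, hSSinv, Matrix.mul_one]
  have hθA : (fun i : {x // x ∈ A} => θ i.1) = Φ *ᵥ θ := by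
    funext i
    simp [hΦdef, phiM, Matrix.mulVec, dotProduct, ite_mul]
  rw [hfinal, Matrix.sub_mulVec, dotProduct_sub, sub_sub_cancel, hθA, hPdef,
    ← Matrix.mulVec_mulVec, ← Matrix.mulVec_mulVec]
  conv_rhs => rw [Matrix.dotProduct_mulVec, Matrix.vecMul_transpose]
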